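/- Let x ∈ A_i and y ∈ A_j with i > 0 and j < 0. If [x, y] = 0, then x = 0 or y = 0. (Lemma 3.3) -/

import Mathlib

open scoped BigOperators

/-- Defining relation of the Weyl algebra: `p * q = q * p + 1`. -/
inductive WeylRel (F : Type*) [CommRing F] :
    FreeAlgebra F (Fin 2) → FreeAlgebra F (Fin 2) → Prop
  | comm : WeylRel F (FreeAlgebra.ι F 0 * FreeAlgebra.ι F 1)
      (FreeAlgebra.ι F 1 * FreeAlgebra.ι F 0 + 1)

/-- The Weyl algebra over `F`. -/
abbrev WeylAlgebra (F : Type*) [CommRing F] := RingQuot (WeylRel F)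

variable (F : Type*) [Field F] [CharZero F]

/-- The generator `p` of the Weyl algebra. -/
noncomputable def Wp : WeylAlgebra F :=
  RingQuot.mkAlgHom F (WeylRel F) (FreeAlgebra.ι F 0)

/-- The generator `q` of the Weyl algebra. -/
noncomputable def Wq : WeylAlgebra F :=
  RingQuot.mkAlgHom F (WeylRel F) (FreeAlgebra.ι F 1)

/-- `x` is solvable if `[x, y] = 1` for some `y`. -/
def Solvable (x : WeylAlgebra F) : Prop := ∃ y : WeylAlgebra F, x * y - y * x = 1

/-- The centralizer `C(x)`. -/
def Cset (x : WeylAlgebra F) : Set (WeylAlgebra F) := {y | x * y - y * x = 0}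

/-- `N(x) = {y | (ad x)^n y = 0 for some n ≥ 1}`. -/
def Nset (x : WeylAlgebra F) : Set (WeylAlgebra F) :=
  {y | ∃ n : ℕ, 1 ≤ n ∧ (fun z => x * z - z * x)^[n] y = 0}

/-- `D(x) = {y | [x,y] = λ y for some scalar λ}`. -/
def Dset (x : WeylAlgebra F) : Set (WeylAlgebra F) :=
  {y | ∃ c : F, x * y - y * x = c • y}

def Delta1 : Set (WeylAlgebra F) :=
  {x | x ∉ Set.range (algebraMap F (WeylAlgebra F)) ∧
    Nset F x = Set.univ ∧ Dset F x = Cset F x}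

def Delta2 : Set (WeylAlgebra F) :=
  {x | x ∉ Set.range (algebraMap F (WeylAlgebra F)) ∧
    Nset F x ≠ Set.univ ∧ Nset F x ≠ Cset F x ∧ Dset F x = Cset F x}

/-- The graded component `A_s = {a | [pq, a] = s • a}`. -/
def Wgrade (s : ℤ) : Set (WeylAlgebra F) :=
  {a | (Wp F * Wq F) * a - a * (Wp F * Wq F) = s • a}

/-- The monomial `p^i q^j`. -/
noncomputable def Wmono (i j : ℕ) : WeylAlgebra F := Wp F ^ i * Wq F ^ j

/-- `α` is the coordinate family of `x` in the basis `p^i q^j`. -/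
def Represents (α : (ℕ × ℕ) →₀ F) (x : WeylAlgebra F) : Prop :=
  x = α.sum fun ij c => c • Wmono F ij.1 ij.2

/-- `v_{ρ,σ}(x) = max { iρ + jσ | (i,j) ∈ E(x) }`. -/
def vdeg (α : (ℕ × ℕ) →₀ F) (ρ σ : ℕ) : ℕ :=
  α.support.sup fun ij => ij.1 * ρ + ij.2 * σ

/-- `E_{ρ,σ}(x)`. -/
def Eset (α : (ℕ × ℕ) →₀ F) (ρ σ : ℕ) : Finset (ℕ × ℕ) :=
  α.support.filter fun ij => ij.1 * ρ + ij.2 * σ = vdeg F α ρ σ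

/-- The `(ρ,σ)`-polynomial of `x`, an element of `F[X,Y]`. -/
noncomputable def wpoly (α : (ℕ × ℕ) →₀ F) (ρ σ : ℕ) : MvPolynomial (Fin 2) F :=
  ∑ ij ∈ Eset F α ρ σ,
    MvPolynomial.monomial (Finsupp.single 0 ij.1 + Finsupp.single 1 ij.2) (α ij)

/-- The `(ρ,σ)`-term of `x`, an element of the Weyl algebra. -/
noncomputable def wterm (α : (ℕ × ℕ) →₀ F) (ρ σ : ℕ) : WeylAlgebra F :=
  ∑ ij ∈ Eset F α ρ σ, α ij • Wmono F ij.1 ij.2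

set_option linter.unusedSectionVars false

open Polynomial

/-- differentiation operator -/
noncomputable def Dop : Module.End F (Polynomial F) := Polynomial.derivative

/-- multiplication by X -/
noncomputable def Mop : Module.End F (Polynomial F) := LinearMap.mulLeft F (Polynomial.X)

lemma weylrel_holds : ∀ ⦃a b : FreeAlgebra F (Fin 2)⦄, WeylRel F a b →
    (FreeAlgebra.lift F ![Dop F, Mop F]) a = (FreeAlgebra.lift F ![Dop F, Mop F]) b := by
  rintro a b ⟨⟩
  simp only [map_mul, map_add, map_one, FreeAlgebra.lift_ι_apply, Matrix.cons_val_zero,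
    Matrix.cons_val_one, Matrix.head_cons]
  refine LinearMap.ext fun f => ?_
  rw [Module.End.mul_apply, LinearMap.add_apply, Module.End.mul_apply, Module.End.one_apply]
  simp only [Dop, Mop, LinearMap.mulLeft_apply]
  show Polynomial.derivative (X * f) = X * Polynomial.derivative f + f
  rw [Polynomial.derivative_mul, Polynomial.derivative_X, one_mul, add_comm]

/-- the representation on F[X] -/
noncomputable def Wrep : WeylAlgebra F →ₐ[F] Module.End F (Polynomial F) :=
  RingQuot.liftAlgHom F ⟨FreeAlgebra.lift F ![Dop F, Mop F], weylrel_holds F⟩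

@[simp] lemma Wrep_p : Wrep F (Wp F) = Dop F := by
  rw [Wp, Wrep, RingQuot.liftAlgHom_mkAlgHom_apply, FreeAlgebra.lift_ι_apply]
  simp

@[simp] lemma Wrep_q : Wrep F (Wq F) = Mop F := by
  rw [Wq, Wrep, RingQuot.liftAlgHom_mkAlgHom_apply, FreeAlgebra.lift_ι_apply]
  simp

lemma Dop_pow (k n : ℕ) : (Dop F ^ k) (X ^ n : F[X]) = (n.descFactorial k : F) • X ^ (n - k) := by
  induction k generalizing n with
  | zero => simp
  | succ k ih =>
    rw [pow_succ, Module.End.mul_apply]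
    show (Dop F ^ k) (Polynomial.derivative (X ^ n)) = _
    rw [Polynomial.derivative_X_pow]
    cases n with
    | zero => simp
    | succ m =>
      rw [← Polynomial.smul_eq_C_mul, map_smul, ih, Nat.succ_descFactorial_succ]
      rw [Nat.add_sub_cancel, Nat.succ_sub_succ, smul_smul]
      push_cast
      ring_nf

lemma Mop_pow (k n : ℕ) : (Mop F ^ k) (X ^ n : F[X]) = X ^ (n + k) := by
  induction k with
  | zero => simp
  | succ k ih =>
    rw [pow_succ', Module.End.mul_apply, ih]
    show (X : F[X]) * X ^ (n + k) = X ^ (n + (k + 1))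
    ring

lemma Wrep_mono (a b n : ℕ) :
    Wrep F (Wq F ^ b * Wp F ^ a) (X ^ n : F[X]) = (n.descFactorial a : F) • X ^ (n - a + b) := by
  have h : Wrep F (Wq F ^ b * Wp F ^ a) = (Mop F) ^ b * (Dop F) ^ a := by
    rw [map_mul, map_pow, map_pow, Wrep_p, Wrep_q]
  rw [h, Module.End.mul_apply, Dop_pow, map_smul, Mop_pow]

/-- The monomial q^j p^i indexed by (i,j) -/
noncomputable def wmonoQP (ij : ℕ × ℕ) : WeylAlgebra F := Wq F ^ ij.2 * Wp F ^ ij.1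

/-- span of the monomials -/
noncomputable def Wspan : Submodule F (WeylAlgebra F) :=
  Submodule.span F (Set.range (wmonoQP F))

lemma mono_mem (a b : ℕ) : Wq F ^ b * Wp F ^ a ∈ Wspan F :=
  Submodule.subset_span ⟨(a, b), rfl⟩

lemma base_rel : Wp F * Wq F = Wq F * Wp F + 1 := by
  have h := RingQuot.mkAlgHom_rel F (WeylRel.comm (F := F))
  simpa only [map_mul, map_add, map_one, Wp, Wq] using h

lemma p_mul_q_pow (c : ℕ) :
    Wp F * Wq F ^ (c + 1) = Wq F ^ (c + 1) * Wp F + ((c + 1 : ℕ) : F) • Wq F ^ c := by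
  induction c with
  | zero => simpa using base_rel F
  | succ c ih =>
    have h1 : Wp F * Wq F ^ (c + 2) = (Wp F * Wq F ^ (c + 1)) * Wq F := by
      rw [mul_assoc, ← pow_succ]
    rw [h1, ih, add_mul, smul_mul_assoc, mul_assoc, base_rel F, mul_add, mul_one, ← mul_assoc,
      ← pow_succ, ← pow_succ]
    push_cast
    module

lemma map_span_closure (f : WeylAlgebra F →ₗ[F] WeylAlgebra F)
    (h : ∀ ij, f (wmonoQP F ij) ∈ Wspan F) : ∀ u ∈ Wspan F, f u ∈ Wspan F := by
  intro u hu
  have hle : Submodule.map f (Wspan F) ≤ Wspan F := by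
    rw [Wspan, Submodule.map_span, Submodule.span_le]
    rintro _ ⟨_, ⟨ij, rfl⟩, rfl⟩
    exact h ij
  exact hle ⟨u, hu, rfl⟩

lemma q_mul_mem : ∀ u ∈ Wspan F, Wq F * u ∈ Wspan F := by
  refine map_span_closure F (LinearMap.mulLeft F (Wq F)) fun ij => ?_
  show Wq F * (Wq F ^ ij.2 * Wp F ^ ij.1) ∈ Wspan F
  rw [← mul_assoc, ← pow_succ']
  exact mono_mem F _ _

lemma p_mul_mem : ∀ u ∈ Wspan F, Wp F * u ∈ Wspan F := by
  refine map_span_closure F (LinearMap.mulLeft F (Wp F)) fun ij => ?_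
  show Wp F * (Wq F ^ ij.2 * Wp F ^ ij.1) ∈ Wspan F
  cases hb : ij.2 with
  | zero =>
    rw [pow_zero, one_mul, ← pow_succ']
    simpa using mono_mem F (ij.1 + 1) 0
  | succ c =>
    rw [← mul_assoc, p_mul_q_pow, add_mul, smul_mul_assoc, mul_assoc, ← pow_succ']
    exact Submodule.add_mem _ (mono_mem F _ _) (Submodule.smul_mem _ _ (mono_mem F _ _))

lemma pk_mul_mem (k : ℕ) : ∀ u ∈ Wspan F, Wp F ^ k * u ∈ Wspan F := by
  induction k with
  | zero => intro u hu; simpa using hu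
  | succ k ih =>
    intro u hu
    rw [pow_succ', mul_assoc]
    exact p_mul_mem F _ (ih u hu)

lemma qk_mul_mem (k : ℕ) : ∀ u ∈ Wspan F, Wq F ^ k * u ∈ Wspan F := by
  induction k with
  | zero => intro u hu; simpa using hu
  | succ k ih =>
    intro u hu
    rw [pow_succ', mul_assoc]
    exact q_mul_mem F _ (ih u hu)

lemma mul_mem_Wspan {u v : WeylAlgebra F} (hu : u ∈ Wspan F) (hv : v ∈ Wspan F) :
    u * v ∈ Wspan F := by
  refine map_span_closure F (LinearMap.mulRight F v) (fun ij => ?_) u hu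
  show Wq F ^ ij.2 * Wp F ^ ij.1 * v ∈ Wspan F
  rw [mul_assoc]
  exact qk_mul_mem F _ _ (pk_mul_mem F _ _ hv)

lemma mem_Wspan (x : WeylAlgebra F) : x ∈ Wspan F := by
  obtain ⟨z, rfl⟩ := RingQuot.mkAlgHom_surjective F (WeylRel F) x
  induction z using FreeAlgebra.induction with
  | grade0 r =>
    rw [AlgHom.commutes, Algebra.algebraMap_eq_smul_one]
    refine Submodule.smul_mem _ _ ?_
    simpa using mono_mem F 0 0
  | grade1 x =>
    fin_cases x
    · show Wp F ∈ Wspan F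
      simpa using mono_mem F 1 0
    · show Wq F ∈ Wspan F
      simpa using mono_mem F 0 1
  | mul a b ha hb => rw [map_mul]; exact mul_mem_Wspan F ha hb
  | add a b ha hb => rw [map_add]; exact Submodule.add_mem _ ha hb

lemma exists_repr (x : WeylAlgebra F) :
    ∃ c : (ℕ × ℕ) →₀ F, x = c.sum fun ij a => a • wmonoQP F ij := by
  have h := mem_Wspan F x
  rw [Wspan, Finsupp.mem_span_range_iff_exists_finsupp] at h
  obtain ⟨c, hc⟩ := h
  exact ⟨c, hc.symm⟩

lemma rep_apply (c : (ℕ × ℕ) →₀ F) (n : ℕ) :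
    Wrep F (c.sum fun ij a => a • wmonoQP F ij) (X ^ n : F[X]) =
      ∑ ij ∈ c.support, (c ij * (n.descFactorial ij.1 : F)) • X ^ (n - ij.1 + ij.2) := by
  rw [Finsupp.sum, map_sum, LinearMap.sum_apply]
  refine Finset.sum_congr rfl fun ij _ => ?_
  rw [map_smul, LinearMap.smul_apply, wmonoQP, Wrep_mono, smul_smul]

lemma rep_coeff (c : (ℕ × ℕ) →₀ F) (n k : ℕ) :
    (Wrep F (c.sum fun ij a => a • wmonoQP F ij) (X ^ n : F[X])).coeff k =
      ∑ ij ∈ c.support, if n - ij.1 + ij.2 = k then c ij * (n.descFactorial ij.1 : F) else 0 := by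
  rw [rep_apply, Polynomial.finset_sum_coeff]
  refine Finset.sum_congr rfl fun ij _ => ?_
  rw [Polynomial.coeff_smul, Polynomial.coeff_X_pow, smul_eq_mul]
  by_cases h : n - ij.1 + ij.2 = k
  · rw [if_pos h, if_pos h.symm, mul_one]
  · rw [if_neg h, if_neg (Ne.symm h), mul_zero]

/-- the polynomial whose values give the coefficients of the action on monomials -/
noncomputable def diagPoly (c : (ℕ × ℕ) →₀ F) (s : ℤ) : Polynomial F :=
  ∑ ij ∈ c.support.filter (fun ij => (ij.2 : ℤ) = (ij.1 : ℤ) + s),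
    Polynomial.C (c ij) * descPochhammer F ij.1

lemma diagPoly_eval (c : (ℕ × ℕ) →₀ F) (s : ℤ) (n : ℕ) :
    (diagPoly F c s).eval (n : F) =
      ∑ ij ∈ c.support,
        if (ij.2 : ℤ) = (ij.1 : ℤ) + s then c ij * (n.descFactorial ij.1 : F) else 0 := by
  rw [diagPoly, Polynomial.eval_finset_sum, Finset.sum_filter]
  refine Finset.sum_congr rfl fun ij _ => ?_
  by_cases h : (ij.2 : ℤ) = (ij.1 : ℤ) + s
  · rw [if_pos h, if_pos h, Polynomial.eval_mul, Polynomial.eval_C,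
      descPochhammer_eval_eq_descFactorial]
  · rw [if_neg h, if_neg h]

lemma grade_coeff_zero {s : ℤ} {x : WeylAlgebra F} (hx : x ∈ Wgrade F s) (n k : ℕ)
    (hk : (k : ℤ) ≠ (n : ℤ) + s) : (Wrep F x (X ^ n : F[X])).coeff k = 0 := by
  have hx' : (Wp F * Wq F) * x - x * (Wp F * Wq F) = s • x := hx
  have hend : Wrep F (Wp F * Wq F) * Wrep F x - Wrep F x * Wrep F (Wp F * Wq F)
      = s • Wrep F x := by
    rw [← map_mul, ← map_mul, ← map_sub, hx', map_zsmul]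
  set g : F[X] := Wrep F x (X ^ n) with hg
  have hH : ∀ f : F[X], Wrep F (Wp F * Wq F) f = Polynomial.derivative (X * f) := by
    intro f
    rw [map_mul, Wrep_p, Wrep_q, Module.End.mul_apply]
    rfl
  have happ := congrArg (fun T : Module.End F (Polynomial F) => T (X ^ n : F[X])) hend
  simp only [LinearMap.sub_apply, Module.End.mul_apply, LinearMap.smul_apply] at happ
  rw [hH, hH, ← hg] at happ
  have hXn : Polynomial.derivative ((X : F[X]) * X ^ n) = ((n + 1 : ℕ) : F) • X ^ n := by
    rw [← pow_succ', Polynomial.derivative_X_pow, Nat.add_sub_cancel, Polynomial.smul_eq_C_mul]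
  rw [hXn, map_smul, ← hg, ← Int.cast_smul_eq_zsmul F] at happ
  -- happ : derivative (X * g) - ((n+1:ℕ):F) • g = (s:F) • g
  have hco := congrArg (fun p : F[X] => p.coeff k) happ
  simp only [Polynomial.coeff_sub, Polynomial.coeff_smul, smul_eq_mul] at hco
  rw [Polynomial.coeff_derivative, Polynomial.coeff_X_mul] at hco
  -- hco : g.coeff k * (k+1) - (n+1) * g.coeff k = s * g.coeff k
  have hfac : ((k : F) + 1 - ((n + 1 : ℕ) : F) - (s : F)) * g.coeff k = 0 := by
    push_cast at hco ⊢
    linear_combination hco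
  have hne : ((k : F) + 1 - ((n + 1 : ℕ) : F) - (s : F)) ≠ 0 := by
    have : (((k : ℤ) - ((n : ℤ) + s) : ℤ) : F) ≠ 0 := by
      rw [Int.cast_ne_zero]
      omega
    push_cast at this ⊢
    intro h
    apply this
    linear_combination h
  exact (mul_eq_zero.mp hfac).resolve_left hne

lemma eq_smul_X_pow (g : F[X]) (e : ℕ) (h : ∀ k, k ≠ e → g.coeff k = 0) :
    g = g.coeff e • X ^ e := by
  ext k
  rw [Polynomial.coeff_smul, Polynomial.coeff_X_pow, smul_eq_mul]
  by_cases hk : k = e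
  · rw [if_pos hk, mul_one, hk]
  · rw [if_neg hk, mul_zero, h k hk]

lemma grade_apply {s : ℤ} {x : WeylAlgebra F} (c : (ℕ × ℕ) →₀ F)
    (hc : x = c.sum fun ij a => a • wmonoQP F ij) (hx : x ∈ Wgrade F s) (n e : ℕ)
    (he : (e : ℤ) = (n : ℤ) + s) :
    Wrep F x (X ^ n : F[X]) = ((diagPoly F c s).eval (n : F)) • X ^ e := by
  have h1 : Wrep F x (X ^ n : F[X]) = (Wrep F x (X ^ n : F[X])).coeff e • X ^ e :=
    eq_smul_X_pow F _ e fun k hk =>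
      grade_coeff_zero F hx n k (fun hkk => hk (by omega))
  rw [h1]
  congr 1
  rw [hc, rep_coeff, diagPoly_eval]
  refine Finset.sum_congr rfl fun ij _ => ?_
  by_cases hle : ij.1 ≤ n
  · have hiff : (n - ij.1 + ij.2 = e) ↔ ((ij.2 : ℤ) = (ij.1 : ℤ) + s) := by omega
    rw [if_congr hiff rfl rfl]
  · have hdf : n.descFactorial ij.1 = 0 := Nat.descFactorial_eq_zero_iff_lt.mpr (by omega)
    rw [hdf, Nat.cast_zero, mul_zero, ite_self, ite_self]

lemma grade_apply_neg {s : ℤ} {x : WeylAlgebra F} (hx : x ∈ Wgrade F s) (n : ℕ)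
    (hneg : (n : ℤ) + s < 0) : Wrep F x (X ^ n : F[X]) = 0 := by
  refine Polynomial.ext fun k => ?_
  rw [Polynomial.coeff_zero]
  exact grade_coeff_zero F hx n k (by omega)

lemma repr_zero (c : (ℕ × ℕ) →₀ F) (x : WeylAlgebra F)
    (hc : x = c.sum fun ij a => a • wmonoQP F ij) (hT : Wrep F x = 0) : x = 0 := by
  have hco : ∀ a b : ℕ, c (a, b) = 0 := by
    intro a
    induction a using Nat.strong_induction_on with
    | _ a IH =>
      intro b
      by_cases hmem : (a, b) ∈ c.support
      · have h0 : (Wrep F x (X ^ a : F[X])).coeff b = 0 := by rw [hT]; simp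
        rw [hc, rep_coeff] at h0
        rw [Finset.sum_eq_single (a, b)] at h0
        · rw [if_pos (by simp), Nat.descFactorial_self] at h0
          rcases mul_eq_zero.mp h0 with h | h
          · exact h
          · exact absurd h (by exact_mod_cast Nat.factorial_ne_zero a)
        · intro ij hij hne
          rcases lt_trichotomy ij.1 a with hlt | heq | hgt
          · have hz : c ij = 0 := by rw [← Prod.mk.eta (p := ij)]; exact IH ij.1 hlt ij.2
            rw [hz, zero_mul, ite_self]
          · have hcond : ¬(a - ij.1 + ij.2 = b) := by
              intro hcond
              exact hne (Prod.ext_iff.mpr ⟨heq, by omega⟩)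
            rw [if_neg hcond]
          · rw [Nat.descFactorial_eq_zero_iff_lt.mpr hgt, Nat.cast_zero, mul_zero, ite_self]
        · intro h; exact (h hmem).elim
      · exact Finsupp.notMem_support_iff.mp hmem
  have hc0 : c = 0 := Finsupp.ext fun ij => by
    rw [← Prod.mk.eta (p := ij)]
    simpa using hco ij.1 ij.2
  rw [hc, hc0, Finsupp.sum_zero_index]

lemma end_eq_zero (T : Module.End F (Polynomial F)) (h : ∀ n : ℕ, T (X ^ n : F[X]) = 0) :
    T = 0 := by
  refine LinearMap.ext fun f => ?_
  rw [LinearMap.zero_apply]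
  induction f using Polynomial.induction_on' with
  | add p q hp hq => rw [map_add, hp, hq, add_zero]
  | monomial n a => rw [← Polynomial.smul_X_eq_monomial, map_smul, h, smul_zero]


lemma monic_taylor {f : F[X]} (hf : f.Monic) (r : F) : (Polynomial.taylor r f).Monic := by
  rw [Polynomial.taylor_apply]
  exact hf.comp (Polynomial.monic_X_add_C r)
    (by rw [Polynomial.natDegree_X_add_C]; exact one_ne_zero)

lemma nextCoeff_taylor (f : F[X]) (hf : f.Monic) (r : F) :
    (Polynomial.taylor r f).nextCoeff = f.nextCoeff + (f.natDegree : F) * r := by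
  by_cases h0 : f.natDegree = 0
  · rw [Polynomial.nextCoeff, Polynomial.nextCoeff, Polynomial.natDegree_taylor, h0]
    simp
  · obtain ⟨e, hd⟩ : ∃ e, f.natDegree = e + 1 := ⟨f.natDegree - 1, by omega⟩
    rw [Polynomial.nextCoeff, Polynomial.nextCoeff, Polynomial.natDegree_taylor, hd,
      if_neg (Nat.succ_ne_zero e), if_neg (Nat.succ_ne_zero e), Nat.add_sub_cancel,
      Polynomial.taylor_coeff]
    have hdeg : (Polynomial.hasseDeriv e f).natDegree ≤ 1 := by
      refine le_trans (Polynomial.natDegree_hasseDeriv_le f e) ?_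
      rw [hd]; omega
    conv_lhs => rw [Polynomial.eq_X_add_C_of_natDegree_le_one hdeg]
    rw [Polynomial.eval_add, Polynomial.eval_mul, Polynomial.eval_C, Polynomial.eval_X,
      Polynomial.eval_C, Polynomial.hasseDeriv_coeff, Polynomial.hasseDeriv_coeff]
    have h1 : (1 + e).choose e = e + 1 := by rw [add_comm]; exact Nat.choose_succ_self_right e
    have h2 : f.coeff (1 + e) = 1 := by rw [add_comm, ← hd]; exact hf.coeff_natDegree
    rw [h1, h2, zero_add, Nat.choose_self]
    push_cast
    ring

lemma poly_contradiction (P Q : F[X]) (hP : P ≠ 0) (hQ : Q ≠ 0) (Mm I : ℕ)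
    (hM1 : 1 ≤ Mm) (hI1 : 1 ≤ I)
    (hfun : ∀ n : ℕ, Q.eval ((n + Mm : ℕ) : F) * P.eval (n : F)
      = P.eval ((n + Mm : ℕ) : F) * Q.eval ((n + Mm + I : ℕ) : F))
    (hQ0 : Q.eval 0 = 0) : False := by
  have hG : Polynomial.taylor (Mm : F) Q * P
      = Polynomial.taylor (Mm : F) P * Polynomial.taylor ((Mm : F) + (I : F)) Q := by
    have hroot : ∀ n : ℕ, (Polynomial.taylor (Mm : F) Q * P -
        Polynomial.taylor (Mm : F) P * Polynomial.taylor ((Mm : F) + (I : F)) Q).IsRoot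
        (n : F) := by
      intro n
      have h := hfun n
      push_cast at h
      rw [Polynomial.IsRoot, Polynomial.eval_sub, Polynomial.eval_mul, Polynomial.eval_mul,
        Polynomial.taylor_eval, Polynomial.taylor_eval, Polynomial.taylor_eval, ← add_assoc,
        sub_eq_zero]
      exact h
    have hinf : {x : F | (Polynomial.taylor (Mm : F) Q * P -
        Polynomial.taylor (Mm : F) P * Polynomial.taylor ((Mm : F) + (I : F)) Q).IsRoot
        x}.Infinite :=
      Set.infinite_of_injective_forall_mem Nat.cast_injective hroot
    exact sub_eq_zero.mp (Polynomial.eq_zero_of_infinite_isRoot _ hinf)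
  set P1 := P * Polynomial.C P.leadingCoeff⁻¹ with hP1d
  set Q1 := Q * Polynomial.C Q.leadingCoeff⁻¹ with hQ1d
  have hP1 : P1.Monic := Polynomial.monic_mul_leadingCoeff_inv hP
  have hQ1 : Q1.Monic := Polynomial.monic_mul_leadingCoeff_inv hQ
  have hG1 : Polynomial.taylor (Mm : F) Q1 * P1
      = Polynomial.taylor (Mm : F) P1 * Polynomial.taylor ((Mm : F) + (I : F)) Q1 := by
    rw [hP1d, hQ1d, Polynomial.taylor_mul, Polynomial.taylor_mul, Polynomial.taylor_mul,
      Polynomial.taylor_C, Polynomial.taylor_C, Polynomial.taylor_C]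
    linear_combination (Polynomial.C Q.leadingCoeff⁻¹ * Polynomial.C P.leadingCoeff⁻¹) * hG
  have e1 := congrArg Polynomial.nextCoeff hG1
  rw [Polynomial.Monic.nextCoeff_mul (monic_taylor F hQ1 (Mm : F)) hP1,
    Polynomial.Monic.nextCoeff_mul (monic_taylor F hP1 (Mm : F))
      (monic_taylor F hQ1 ((Mm : F) + (I : F))),
    nextCoeff_taylor F Q1 hQ1 (Mm : F), nextCoeff_taylor F P1 hP1 (Mm : F),
    nextCoeff_taylor F Q1 hQ1 ((Mm : F) + (I : F))] at e1
  have e2 : ((P1.natDegree * Mm + Q1.natDegree * I : ℕ) : F) = 0 := by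
    push_cast
    linear_combination -e1
  have e3 : P1.natDegree * Mm + Q1.natDegree * I = 0 := Nat.cast_eq_zero.mp e2
  have hq0 : Q1.natDegree = 0 := by
    have h : Q1.natDegree * I = 0 := by omega
    rcases Nat.mul_eq_zero.mp h with h' | h'
    · exact h'
    · omega
  have h1 : Q1.eval 0 = 1 := by
    rw [← Polynomial.coeff_zero_eq_eval_zero, ← hq0]
    exact hQ1.coeff_natDegree
  have h2 : Q1.eval 0 = 0 := by rw [hQ1d, Polynomial.eval_mul, hQ0, zero_mul]
  rw [h1] at h2
  exact one_ne_zero h2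

/-- Lemma 3.3. -/
theorem eq_zero_of_commute_of_grade (i j : ℤ) (hi : 0 < i) (hj : j < 0)
    (x y : WeylAlgebra F) (hx : x ∈ Wgrade F i) (hy : y ∈ Wgrade F j)
    (hxy : x * y - y * x = 0) :
    x = 0 ∨ y = 0 := by
  by_contra hcon
  push_neg at hcon
  obtain ⟨hx0, hy0⟩ := hcon
  obtain ⟨c, hc⟩ := exists_repr F x
  obtain ⟨d, hd⟩ := exists_repr F y
  set I := i.toNat with hIdef
  have hIi : (I : ℤ) = i := Int.toNat_of_nonneg hi.le
  have hI1 : 1 ≤ I := by omega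
  set Mm := (-j).toNat with hMdef
  have hMj : (Mm : ℤ) = -j := Int.toNat_of_nonneg (by omega)
  have hM1 : 1 ≤ Mm := by omega
  set P := diagPoly F c i with hPdef
  set Q := diagPoly F d j with hQdef
  have hTx : ∀ n : ℕ, Wrep F x (X ^ n : F[X]) = (P.eval ((n : ℕ) : F)) • X ^ (n + I) :=
    fun n => grade_apply F c hc hx n (n + I) (by push_cast; omega)
  have hUy : ∀ n : ℕ, Mm ≤ n →
      Wrep F y (X ^ n : F[X]) = (Q.eval ((n : ℕ) : F)) • X ^ (n - Mm) :=
    fun n hn => grade_apply F d hd hy n (n - Mm) (by rw [Nat.cast_sub hn]; omega)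
  have hUy0 : ∀ n : ℕ, n < Mm → Wrep F y (X ^ n : F[X]) = 0 :=
    fun n hn => grade_apply_neg F hy n (by omega)
  have hPne : P ≠ 0 := by
    intro h
    apply hx0
    refine repr_zero F c x hc (end_eq_zero F _ fun n => ?_)
    rw [hTx n, h, Polynomial.eval_zero, zero_smul]
  have hQne : Q ≠ 0 := by
    intro h
    apply hy0
    refine repr_zero F d y hd (end_eq_zero F _ fun n => ?_)
    rcases lt_or_ge n Mm with hn | hn
    · exact hUy0 n hn
    · rw [hUy n hn, h, Polynomial.eval_zero, zero_smul]
  have hQ0 : Q.eval 0 = 0 := by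
    have h : Q.eval ((0 : ℕ) : F) = 0 := by
      rw [hQdef, diagPoly_eval]
      refine Finset.sum_eq_zero fun ij _ => ?_
      split_ifs with hcond
      · rw [Nat.descFactorial_eq_zero_iff_lt.mpr (by omega), Nat.cast_zero, mul_zero]
      · rfl
    simpa using h
  have hcomm : Wrep F x * Wrep F y = Wrep F y * Wrep F x := by
    rw [← map_mul, ← map_mul]
    exact congrArg _ (sub_eq_zero.mp hxy)
  have hfun : ∀ n : ℕ, Q.eval ((n + Mm : ℕ) : F) * P.eval ((n : ℕ) : F)
      = P.eval ((n + Mm : ℕ) : F) * Q.eval ((n + Mm + I : ℕ) : F) := by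
    intro n
    have happ := congrArg (fun T : Module.End F (Polynomial F) => T (X ^ (n + Mm) : F[X])) hcomm
    simp only [Module.End.mul_apply] at happ
    rw [hUy (n + Mm) (by omega)] at happ
    rw [map_smul] at happ
    rw [show n + Mm - Mm = n by omega] at happ
    rw [hTx n] at happ
    rw [hTx (n + Mm)] at happ
    rw [map_smul] at happ
    rw [hUy (n + Mm + I) (by omega)] at happ
    rw [show n + Mm + I - Mm = n + I by omega] at happ
    have hco := congrArg (fun p : F[X] => p.coeff (n + I)) happ
    simp only [Polynomial.coeff_smul, Polynomial.coeff_X_pow, if_pos rfl, smul_eq_mul,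
      if_true, mul_one] at hco
    exact hco
  exact poly_contradiction F P Q hPne hQne Mm I hM1 hI1 hfun hQ0
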